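/- Let k be a field, G a group, and X an object of Rep k G. If λ and μ are two half-braidings on X whose components at the left regular representation agree, i.e. λ_{leftRegular} = μ_{leftRegular} as morphisms k[G] ⊗ X → X ⊗ k[G], then λ = μ (a half-braiding on an object of Rep k G is completely determined by its component at the left regular representation). -/

import Mathlib

open CategoryTheory CategoryTheory.MonoidalCategory

universe u

/-- A half-braiding on an object `X` of `Rep k G` is completely determined
by its component at the left regular representation `k[G]`: if the components of two
half-braidings `l`, `m` at `Rep.leftRegular k G` agree (as morphisms
`k[G] ⊗ X ⟶ X ⊗ k[G]`, i.e. the inverses `(l.β _).inv` in Mathlib's convention), then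
`l = m`. -/
theorem halfBraiding_ext_of_leftRegular
    {k G : Type u} [Field k] [Group G] (X : Rep k G)
    (l m : HalfBraiding X)
    (h : (l.β (Rep.leftRegular k G)).inv = (m.β (Rep.leftRegular k G)).inv) :
    l = m := by
  have key : ∀ A : Rep k G, (l.β A).inv = (m.β A).inv := by
    intro A
    have natl : ∀ (f : Rep.leftRegular k G ⟶ A),
        (f ▷ X) ≫ (l.β A).inv = (l.β _).inv ≫ (X ◁ f) := by
      intro f
      rw [Iso.comp_inv_eq, Category.assoc, l.naturality, Iso.inv_hom_id_assoc]
    have natm : ∀ (f : Rep.leftRegular k G ⟶ A),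
        (f ▷ X) ≫ (m.β A).inv = (m.β _).inv ≫ (X ◁ f) := by
      intro f
      rw [Iso.comp_inv_eq, Category.assoc, m.naturality, Iso.inv_hom_id_assoc]
    ext1
    apply Representation.IntertwiningMap.ext
    apply TensorProduct.ext'
    intro a x
    have hl := congrArg (fun f => f.hom ((MonoidAlgebra.single (1:G) (1:k) : Rep.leftRegular k G) ⊗ₜ[k] x))
      (natl (Rep.leftRegularHom A a))
    have hm := congrArg (fun f => f.hom ((MonoidAlgebra.single (1:G) (1:k) : Rep.leftRegular k G) ⊗ₜ[k] x))
      (natm (Rep.leftRegularHom A a))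
    simp [h] at hl hm
    have ha : ((Finsupp.lift (↑A.V) k G) fun g => (A.ρ g) a) (Finsupp.single (1:G) (1:k))
        = a := by simp
    exact hl.trans hm.symm
  have : l.β = m.β := funext fun A => Iso.ext ((Iso.inv_eq_inv _ _).mp (key A))
  cases l; cases m; simpa using this
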